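/- The image ∂Γ ⊆ {±1}^W consists exactly of those functions f : W → {±1} whose support meets V in a finite set of even cardinality and meets Ṽ in a finite set of even cardinality. -/

import Mathlib

/-- Edges of the square lattice ℤ²: `(p, true)` is the horizontal edge from `p`
to `p + (1,0)`, `(p, false)` the vertical edge from `p` to `p + (0,1)`. -/
abbrev LatEdge := (ℤ × ℤ) × Bool

/-- The star of a vertex `v`: the 4 edges incident to `v`. -/
def vertexStar (v : ℤ × ℤ) : Finset LatEdge :=
  {(v, true), (v, false), ((v.1 - 1, v.2), true), ((v.1, v.2 - 1), false)}

/-- The boundary of the face with lower-left corner `p`: its 4 edges. -/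
def faceBdry (p : ℤ × ℤ) : Finset LatEdge :=
  {(p, true), (p, false), ((p.1, p.2 + 1), true), ((p.1 + 1, p.2), false)}

/-- `Γ`: finitely supported `ℤ/2`-valued functions on the disjoint union
`E_x ⊔ E_z` of two copies of the edge set (`Sum.inl` is the `x`-copy,
`Sum.inr` is the `z`-copy). -/
abbrev ToricΓ := (LatEdge ⊕ LatEdge) →₀ ZMod 2

/-- The boundary map `∂ : Γ → (ℤ/2)^W`, `W = V ⊔ Ṽ`:
`∂γ(v) = Σ_{e ∋ v} γ(j_z e)` on vertices and `∂γ(ṽ) = Σ_{e ∈ ṽ} γ(j_x e)` on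
faces (written additively in `ℤ/2`). -/
def toricBoundary (γ : ToricΓ) : (ℤ × ℤ) ⊕ (ℤ × ℤ) → ZMod 2
  | Sum.inl v => ∑ e ∈ vertexStar v, γ (Sum.inr e)
  | Sum.inr p => ∑ e ∈ faceBdry p, γ (Sum.inl e)

/-- the image of `∂ : Γ → (ℤ/2)^W` consists exactly of those
functions `f : W → ℤ/2`, `W = V ⊔ Ṽ`, whose support meets the vertex set `V`
in a finite set of even cardinality and meets the face set `Ṽ` in a finite set
of even cardinality. -/
-- endpoints of an edge / faces adjacent to an edge
def ends (e : LatEdge) : Finset (ℤ × ℤ) :=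
  {e.1, e.1 + if e.2 then (1, 0) else (0, 1)}

def fends (e : LatEdge) : Finset (ℤ × ℤ) :=
  {e.1, e.1 - if e.2 then (0, 1) else (1, 0)}

lemma mem_vertexStar {e : LatEdge} {v : ℤ × ℤ} : e ∈ vertexStar v ↔ v ∈ ends e := by
  rcases e with ⟨⟨a, b⟩, c⟩
  cases c <;> simp [vertexStar, ends, Prod.ext_iff] <;> omega

lemma mem_faceBdry {e : LatEdge} {p : ℤ × ℤ} : e ∈ faceBdry p ↔ p ∈ fends e := by
  rcases e with ⟨⟨a, b⟩, c⟩
  cases c <;> simp [faceBdry, fends, Prod.ext_iff] <;> omega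

lemma ends_card (e : LatEdge) : (ends e).card = 2 := by
  rcases e with ⟨⟨a, b⟩, c⟩
  cases c <;> · rw [ends]; rw [Finset.card_pair (by simp [Prod.ext_iff]; try omega)]

lemma fends_card (e : LatEdge) : (fends e).card = 2 := by
  rcases e with ⟨⟨a, b⟩, c⟩
  cases c <;> · rw [fends]; rw [Finset.card_pair (by simp [Prod.ext_iff]; try omega)]

lemma zmod2_eq_one {x : ZMod 2} (h : x ≠ 0) : x = 1 := by revert h; revert x; decide

lemma toricBoundary_add (γ δ : ToricΓ) :
    toricBoundary (γ + δ) = toricBoundary γ + toricBoundary δ := by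
  funext x
  cases x <;> simp [toricBoundary, Finset.sum_add_distrib]

lemma range_add {f g : (ℤ × ℤ) ⊕ (ℤ × ℤ) → ZMod 2} (hf : f ∈ Set.range toricBoundary)
    (hg : g ∈ Set.range toricBoundary) : f + g ∈ Set.range toricBoundary := by
  obtain ⟨γ, rfl⟩ := hf; obtain ⟨δ, rfl⟩ := hg
  exact ⟨γ + δ, toricBoundary_add γ δ⟩

lemma range_zero : (0 : (ℤ × ℤ) ⊕ (ℤ × ℤ) → ZMod 2) ∈ Set.range toricBoundary := by
  refine ⟨0, ?_⟩
  funext x; cases x <;> simp [toricBoundary]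

def pairV (u v : ℤ × ℤ) : (ℤ × ℤ) ⊕ (ℤ × ℤ) → ZMod 2
  | Sum.inl w => (if w = u then 1 else 0) + (if w = v then 1 else 0)
  | Sum.inr _ => 0

def pairF (u v : ℤ × ℤ) : (ℤ × ℤ) ⊕ (ℤ × ℤ) → ZMod 2
  | Sum.inr w => (if w = u then 1 else 0) + (if w = v then 1 else 0)
  | Sum.inl _ => 0

lemma pairV_comm (u v : ℤ × ℤ) : pairV u v = pairV v u := by
  funext x; cases x <;> simp [pairV, add_comm]

lemma pairF_comm (u v : ℤ × ℤ) : pairF u v = pairF v u := by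
  funext x; cases x <;> simp [pairF, add_comm]

lemma pairV_self (u : ℤ × ℤ) : pairV u u = 0 := by
  funext x; cases x <;> simp [pairV, CharTwo.add_self_eq_zero]

lemma pairF_self (u : ℤ × ℤ) : pairF u u = 0 := by
  funext x; cases x <;> simp [pairF, CharTwo.add_self_eq_zero]

lemma pairV_trans (u v t : ℤ × ℤ) : pairV u v + pairV v t = pairV u t := by
  funext x
  cases x with
  | inl w =>
    simp only [pairV, Pi.add_apply]
    linear_combination (CharTwo.add_self_eq_zero (if w = v then (1 : ZMod 2) else 0))
  | inr w => simp [pairV]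

lemma pairF_trans (u v t : ℤ × ℤ) : pairF u v + pairF v t = pairF u t := by
  funext x
  cases x with
  | inr w =>
    simp only [pairF, Pi.add_apply]
    linear_combination (CharTwo.add_self_eq_zero (if w = v then (1 : ZMod 2) else 0))
  | inl w => simp [pairF]

lemma boundary_single_z (e : LatEdge) :
    toricBoundary (Finsupp.single (Sum.inr e) 1) =
      pairV e.1 (e.1 + if e.2 then (1, 0) else (0, 1)) := by
  have hne : e.1 ≠ e.1 + if e.2 then ((1 : ℤ), (0 : ℤ)) else (0, 1) := by
    cases h : e.2 <;> simp [Prod.ext_iff] <;> omega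
  funext x
  cases x with
  | inl v =>
    show (∑ e' ∈ vertexStar v, Finsupp.single (Sum.inr e) (1 : ZMod 2) (Sum.inr e')) = _
    have : ∀ e' : LatEdge, Finsupp.single (Sum.inr e : LatEdge ⊕ LatEdge) (1 : ZMod 2) (Sum.inr e')
        = if e = e' then (1 : ZMod 2) else 0 := by
      intro e'
      rw [Finsupp.single_apply]
      simp
    rw [Finset.sum_congr rfl fun e' _ => this e', Finset.sum_ite_eq]
    simp only [mem_vertexStar]
    simp only [ends, Finset.mem_insert, Finset.mem_singleton, pairV]
    by_cases h1 : v = e.1 <;> by_cases h2 : v = e.1 + if e.2 then ((1:ℤ), (0:ℤ)) else (0, 1) <;>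
      simp_all
  | inr p =>
    show (∑ e' ∈ faceBdry p, Finsupp.single (Sum.inr e) (1 : ZMod 2) (Sum.inl e')) = _
    simp [Finsupp.single_apply, pairV]

lemma boundary_single_x (e : LatEdge) :
    toricBoundary (Finsupp.single (Sum.inl e) 1) =
      pairF e.1 (e.1 - if e.2 then (0, 1) else (1, 0)) := by
  have hne : (if e.2 then ((0 : ℤ), (1 : ℤ)) else (1, 0)) ≠ 0 := by
    cases e.2 <;> simp [Prod.ext_iff]
  funext x
  cases x with
  | inr p =>
    show (∑ e' ∈ faceBdry p, Finsupp.single (Sum.inl e : LatEdge ⊕ LatEdge) (1 : ZMod 2) (Sum.inl e')) = _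
    have : ∀ e' : LatEdge, Finsupp.single (Sum.inl e : LatEdge ⊕ LatEdge) (1 : ZMod 2) (Sum.inl e')
        = if e = e' then (1 : ZMod 2) else 0 := by
      intro e'
      rw [Finsupp.single_apply]
      simp
    rw [Finset.sum_congr rfl fun e' _ => this e', Finset.sum_ite_eq]
    simp only [mem_faceBdry]
    simp only [fends, Finset.mem_insert, Finset.mem_singleton, pairF]
    by_cases h1 : p = e.1 <;> by_cases h2 : p = e.1 - if e.2 then ((0:ℤ), (1:ℤ)) else (1, 0) <;>
      simp_all
  | inl v =>
    show (∑ e' ∈ vertexStar v, Finsupp.single (Sum.inl e : LatEdge ⊕ LatEdge) (1 : ZMod 2) (Sum.inr e')) = _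
    simp [Finsupp.single_apply, pairF]

lemma range_trans {u v t : ℤ × ℤ} (h1 : pairV u v ∈ Set.range toricBoundary)
    (h2 : pairV v t ∈ Set.range toricBoundary) : pairV u t ∈ Set.range toricBoundary := by
  rw [← pairV_trans u v t]; exact range_add h1 h2

lemma range_transF {u v t : ℤ × ℤ} (h1 : pairF u v ∈ Set.range toricBoundary)
    (h2 : pairF v t ∈ Set.range toricBoundary) : pairF u t ∈ Set.range toricBoundary := by
  rw [← pairF_trans u v t]; exact range_add h1 h2

lemma pairV_mem (u v : ℤ × ℤ) : pairV u v ∈ Set.range toricBoundary := by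
  have stepR : ∀ w : ℤ × ℤ, pairV w (w.1 + 1, w.2) ∈ Set.range toricBoundary := by
    intro w
    have h : pairV w (w + ((1 : ℤ), (0 : ℤ))) ∈ Set.range toricBoundary :=
      ⟨_, boundary_single_z (w, true)⟩
    rwa [show w + ((1 : ℤ), (0 : ℤ)) = (w.1 + 1, w.2) from by simp [Prod.ext_iff]] at h
  have stepU : ∀ w : ℤ × ℤ, pairV w (w.1, w.2 + 1) ∈ Set.range toricBoundary := by
    intro w
    have h : pairV w (w + ((0 : ℤ), (1 : ℤ))) ∈ Set.range toricBoundary :=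
      ⟨_, boundary_single_z (w, false)⟩
    rwa [show w + ((0 : ℤ), (1 : ℤ)) = (w.1, w.2 + 1) from by simp [Prod.ext_iff]] at h
  have horiz : ∀ (a : ℤ) (w : ℤ × ℤ), pairV w (w.1 + a, w.2) ∈ Set.range toricBoundary := by
    intro a w
    induction a using Int.induction_on with
    | zero => simpa using (pairV_self w ▸ range_zero)
    | succ n ih =>
      have h2 := stepR (w.1 + n, w.2)
      have h3 := range_trans ih h2
      rw [show (((w.1 + (n : ℤ), w.2).1 + 1, (w.1 + (n : ℤ), w.2).2) : ℤ × ℤ)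
          = (w.1 + ((n : ℤ) + 1), w.2) from by simp only [Prod.mk.injEq, and_true, true_and]; omega] at h3
      exact h3
    | pred n ih =>
      have h2 := stepR (w.1 + (-(n : ℤ) - 1), w.2)
      rw [show (((w.1 + (-(n : ℤ) - 1), w.2).1 + 1, (w.1 + (-(n : ℤ) - 1), w.2).2) : ℤ × ℤ)
          = (w.1 + -(n : ℤ), w.2) from by simp only [Prod.mk.injEq, and_true, true_and]; omega] at h2
      rw [pairV_comm] at h2
      exact range_trans ih h2
  have vert : ∀ (b : ℤ) (w : ℤ × ℤ), pairV w (w.1, w.2 + b) ∈ Set.range toricBoundary := by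
    intro b w
    induction b using Int.induction_on with
    | zero => simpa using (pairV_self w ▸ range_zero)
    | succ n ih =>
      have h2 := stepU (w.1, w.2 + n)
      have h3 := range_trans ih h2
      rw [show (((w.1, w.2 + (n : ℤ)).1, (w.1, w.2 + (n : ℤ)).2 + 1) : ℤ × ℤ)
          = (w.1, w.2 + ((n : ℤ) + 1)) from by simp only [Prod.mk.injEq, and_true, true_and]; omega] at h3
      exact h3
    | pred n ih =>
      have h2 := stepU (w.1, w.2 + (-(n : ℤ) - 1))
      rw [show (((w.1, w.2 + (-(n : ℤ) - 1)).1, (w.1, w.2 + (-(n : ℤ) - 1)).2 + 1) : ℤ × ℤ)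
          = (w.1, w.2 + -(n : ℤ)) from by simp only [Prod.mk.injEq, and_true, true_and]; omega] at h2
      rw [pairV_comm] at h2
      exact range_trans ih h2
  have h1 := horiz (v.1 - u.1) u
  have h2 := vert (v.2 - u.2) (u.1 + (v.1 - u.1), u.2)
  have h3 := range_trans h1 h2
  rw [show (((u.1 + (v.1 - u.1), u.2).1, (u.1 + (v.1 - u.1), u.2).2 + (v.2 - u.2)) : ℤ × ℤ)
      = v from Prod.ext (show u.1 + (v.1 - u.1) = v.1 by omega)
        (show u.2 + (v.2 - u.2) = v.2 by omega)] at h3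
  exact h3

lemma pairF_mem (u v : ℤ × ℤ) : pairF u v ∈ Set.range toricBoundary := by
  have stepD : ∀ w : ℤ × ℤ, pairF w (w.1, w.2 - 1) ∈ Set.range toricBoundary := by
    intro w
    have h : pairF w (w - ((0 : ℤ), (1 : ℤ))) ∈ Set.range toricBoundary :=
      ⟨_, boundary_single_x (w, true)⟩
    rwa [show w - ((0 : ℤ), (1 : ℤ)) = (w.1, w.2 - 1) from by simp [Prod.ext_iff]] at h
  have stepL : ∀ w : ℤ × ℤ, pairF w (w.1 - 1, w.2) ∈ Set.range toricBoundary := by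
    intro w
    have h : pairF w (w - ((1 : ℤ), (0 : ℤ))) ∈ Set.range toricBoundary :=
      ⟨_, boundary_single_x (w, false)⟩
    rwa [show w - ((1 : ℤ), (0 : ℤ)) = (w.1 - 1, w.2) from by simp [Prod.ext_iff]] at h
  have horiz : ∀ (a : ℤ) (w : ℤ × ℤ), pairF w (w.1 + a, w.2) ∈ Set.range toricBoundary := by
    intro a w
    induction a using Int.induction_on with
    | zero => simpa using (pairF_self w ▸ range_zero)
    | succ n ih =>
      have h2 := stepL (w.1 + ((n : ℤ) + 1), w.2)
      rw [show (((w.1 + ((n : ℤ) + 1), w.2).1 - 1, (w.1 + ((n : ℤ) + 1), w.2).2) : ℤ × ℤ)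
          = (w.1 + (n : ℤ), w.2) from by simp only [Prod.mk.injEq, and_true, true_and]; omega] at h2
      rw [pairF_comm] at h2
      exact range_transF ih h2
    | pred n ih =>
      have h2 := stepL (w.1 + -(n : ℤ), w.2)
      rw [show (((w.1 + -(n : ℤ), w.2).1 - 1, (w.1 + -(n : ℤ), w.2).2) : ℤ × ℤ)
          = (w.1 + (-(n : ℤ) - 1), w.2) from by
            simp only [Prod.mk.injEq, and_true, true_and]; omega] at h2
      exact range_transF ih h2
  have vert : ∀ (b : ℤ) (w : ℤ × ℤ), pairF w (w.1, w.2 + b) ∈ Set.range toricBoundary := by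
    intro b w
    induction b using Int.induction_on with
    | zero => simpa using (pairF_self w ▸ range_zero)
    | succ n ih =>
      have h2 := stepD (w.1, w.2 + ((n : ℤ) + 1))
      rw [show (((w.1, w.2 + ((n : ℤ) + 1)).1, (w.1, w.2 + ((n : ℤ) + 1)).2 - 1) : ℤ × ℤ)
          = (w.1, w.2 + (n : ℤ)) from by simp only [Prod.mk.injEq, and_true, true_and]; omega] at h2
      rw [pairF_comm] at h2
      exact range_transF ih h2
    | pred n ih =>
      have h2 := stepD (w.1, w.2 + -(n : ℤ))
      rw [show (((w.1, w.2 + -(n : ℤ)).1, (w.1, w.2 + -(n : ℤ)).2 - 1) : ℤ × ℤ)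
          = (w.1, w.2 + (-(n : ℤ) - 1)) from by
            simp only [Prod.mk.injEq, and_true, true_and]; omega] at h2
      exact range_transF ih h2
  have h1 := horiz (v.1 - u.1) u
  have h2 := vert (v.2 - u.2) (u.1 + (v.1 - u.1), u.2)
  have h3 := range_transF h1 h2
  rw [show (((u.1 + (v.1 - u.1), u.2).1, (u.1 + (v.1 - u.1), u.2).2 + (v.2 - u.2)) : ℤ × ℤ)
      = v from Prod.ext (show u.1 + (v.1 - u.1) = v.1 by omega)
        (show u.2 + (v.2 - u.2) = v.2 by omega)] at h3
  exact h3

lemma indV_mem (s : Finset (ℤ × ℤ)) (hs : Even s.card) :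
    (fun x => match x with
      | Sum.inl v => if v ∈ s then (1 : ZMod 2) else 0
      | Sum.inr _ => 0) ∈ Set.range toricBoundary := by
  induction s using Finset.strongInduction with
  | _ s ih =>
    rcases Finset.eq_empty_or_nonempty s with rfl | ⟨u, hu⟩
    · convert range_zero using 1
      funext x; cases x <;> simp
    · have hcard : s.card % 2 = 0 := Nat.even_iff.mp hs
      have hpos : 0 < s.card := Finset.card_pos.mpr ⟨u, hu⟩
      have h1 : (s.erase u).Nonempty := by
        rw [← Finset.card_pos, Finset.card_erase_of_mem hu]; omega
      obtain ⟨v, hv⟩ := h1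
      have hvu : v ≠ u := (Finset.mem_erase.mp hv).1
      have hvs : v ∈ s := (Finset.mem_erase.mp hv).2
      have hts : (s.erase u).erase v ⊂ s :=
        (Finset.erase_subset v (s.erase u)).trans_ssubset (Finset.erase_ssubset hu)
      have htc : ((s.erase u).erase v).card = s.card - 2 := by
        rw [Finset.card_erase_of_mem hv, Finset.card_erase_of_mem hu]; omega
      have hte : Even ((s.erase u).erase v).card := by
        rw [Nat.even_iff, htc]; omega
      have hmem := ih _ hts hte
      have key : (fun x => match x with
          | Sum.inl w => if w ∈ s then (1 : ZMod 2) else 0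
          | Sum.inr _ => 0) = (fun x => match x with
          | Sum.inl w => if w ∈ (s.erase u).erase v then (1 : ZMod 2) else 0
          | Sum.inr _ => (0 : ZMod 2)) + pairV u v := by
        funext x
        cases x with
        | inr p => simp [pairV]
        | inl w =>
          show (if w ∈ s then (1 : ZMod 2) else 0) =
            (if w ∈ (s.erase u).erase v then (1 : ZMod 2) else 0) +
              ((if w = u then 1 else 0) + (if w = v then 1 else 0))
          by_cases hwu : w = u <;> by_cases hwv : w = v <;>
            simp_all [Finset.mem_erase]
      rw [key]
      exact range_add hmem (pairV_mem u v)

lemma indF_mem (s : Finset (ℤ × ℤ)) (hs : Even s.card) :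
    (fun x => match x with
      | Sum.inr v => if v ∈ s then (1 : ZMod 2) else 0
      | Sum.inl _ => 0) ∈ Set.range toricBoundary := by
  induction s using Finset.strongInduction with
  | _ s ih =>
    rcases Finset.eq_empty_or_nonempty s with rfl | ⟨u, hu⟩
    · convert range_zero using 1
      funext x; cases x <;> simp
    · have hcard : s.card % 2 = 0 := Nat.even_iff.mp hs
      have hpos : 0 < s.card := Finset.card_pos.mpr ⟨u, hu⟩
      have h1 : (s.erase u).Nonempty := by
        rw [← Finset.card_pos, Finset.card_erase_of_mem hu]; omega
      obtain ⟨v, hv⟩ := h1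
      have hvu : v ≠ u := (Finset.mem_erase.mp hv).1
      have hvs : v ∈ s := (Finset.mem_erase.mp hv).2
      have hts : (s.erase u).erase v ⊂ s :=
        (Finset.erase_subset v (s.erase u)).trans_ssubset (Finset.erase_ssubset hu)
      have htc : ((s.erase u).erase v).card = s.card - 2 := by
        rw [Finset.card_erase_of_mem hv, Finset.card_erase_of_mem hu]; omega
      have hte : Even ((s.erase u).erase v).card := by
        rw [Nat.even_iff, htc]; omega
      have hmem := ih _ hts hte
      have key : (fun x => match x with
          | Sum.inr w => if w ∈ s then (1 : ZMod 2) else 0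
          | Sum.inl _ => 0) = (fun x => match x with
          | Sum.inr w => if w ∈ (s.erase u).erase v then (1 : ZMod 2) else 0
          | Sum.inl _ => (0 : ZMod 2)) + pairF u v := by
        funext x
        cases x with
        | inl p => simp [pairF]
        | inr w =>
          show (if w ∈ s then (1 : ZMod 2) else 0) =
            (if w ∈ (s.erase u).erase v then (1 : ZMod 2) else 0) +
              ((if w = u then 1 else 0) + (if w = v then 1 else 0))
          by_cases hwu : w = u <;> by_cases hwv : w = v <;>
            simp_all [Finset.mem_erase]
      rw [key]
      exact range_add hmem (pairF_mem u v)

lemma forward_V (γ : ToricΓ) :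
    {v | toricBoundary γ (Sum.inl v) ≠ 0}.Finite ∧
      Even {v | toricBoundary γ (Sum.inl v) ≠ 0}.ncard := by
  classical
  set Efin : Finset LatEdge := γ.support.biUnion
    (fun x => match x with | Sum.inr e => {e} | Sum.inl _ => ∅) with hEfin
  have hE : ∀ e : LatEdge, e ∈ Efin ↔ γ (Sum.inr e) ≠ 0 := by
    intro e
    simp only [hEfin, Finset.mem_biUnion, Finsupp.mem_support_iff]
    constructor
    · rintro ⟨x, hx, hmem⟩
      cases x with
      | inl e' => simp at hmem
      | inr e' => simp at hmem; subst hmem; exact hx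
    · intro h; exact ⟨Sum.inr e, h, by simp⟩
  set S : Finset (ℤ × ℤ) := Efin.biUnion ends with hS
  have hsub : {v | toricBoundary γ (Sum.inl v) ≠ 0} ⊆ ↑S := by
    intro v hv
    obtain ⟨e, he, hne⟩ := Finset.exists_ne_zero_of_sum_ne_zero hv
    have heE : e ∈ Efin := (hE e).mpr hne
    exact Finset.mem_coe.mpr (Finset.mem_biUnion.mpr ⟨e, heE, mem_vertexStar.mp he⟩)
  have hfin := Set.Finite.subset S.finite_toSet hsub
  refine ⟨hfin, ?_⟩
  have hrw : ∀ v, toricBoundary γ (Sum.inl v) =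
      ∑ e ∈ Efin, if e ∈ vertexStar v then γ (Sum.inr e) else 0 := by
    intro v
    show (∑ e ∈ vertexStar v, γ (Sum.inr e)) = _
    rw [Finset.sum_ite_mem]
    symm
    apply Finset.sum_subset Finset.inter_subset_right
    intro e he hne
    have : e ∉ Efin := fun h => hne (Finset.mem_inter.mpr ⟨h, he⟩)
    by_contra hc
    exact this ((hE e).mpr hc)
  have hsum0 : ∑ v ∈ S, toricBoundary γ (Sum.inl v) = 0 := by
    calc ∑ v ∈ S, toricBoundary γ (Sum.inl v)
        = ∑ v ∈ S, ∑ e ∈ Efin, if e ∈ vertexStar v then γ (Sum.inr e) else 0 :=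
          Finset.sum_congr rfl fun v _ => hrw v
      _ = ∑ e ∈ Efin, ∑ v ∈ S, if e ∈ vertexStar v then γ (Sum.inr e) else 0 :=
          Finset.sum_comm
      _ = ∑ e ∈ Efin, ∑ v ∈ S, if v ∈ ends e then γ (Sum.inr e) else 0 := by
          refine Finset.sum_congr rfl fun e _ => Finset.sum_congr rfl fun v _ => ?_
          simp only [mem_vertexStar]
      _ = ∑ e ∈ Efin, ∑ v ∈ S ∩ ends e, γ (Sum.inr e) := by
          refine Finset.sum_congr rfl fun e _ => ?_
          rw [Finset.sum_ite_mem]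
      _ = ∑ e ∈ Efin, ∑ v ∈ ends e, γ (Sum.inr e) := by
          refine Finset.sum_congr rfl fun e he => ?_
          congr 1
          exact Finset.inter_eq_right.mpr (Finset.subset_biUnion_of_mem ends he)
      _ = ∑ e ∈ Efin, (2 : ℕ) • γ (Sum.inr e) := by
          refine Finset.sum_congr rfl fun e _ => ?_
          rw [Finset.sum_const, ends_card]
      _ = 0 := by
          refine Finset.sum_eq_zero fun e _ => ?_
          rw [two_nsmul, CharTwo.add_self_eq_zero]
  have hT : hfin.toFinset ⊆ S := by
    intro x hx
    exact hsub (hfin.mem_toFinset.mp hx)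
  have hsum1 : ∑ v ∈ hfin.toFinset, toricBoundary γ (Sum.inl v) = 0 := by
    rw [Finset.sum_subset hT (fun x _ hx => by
      simpa using fun h => hx (hfin.mem_toFinset.mpr h))]
    exact hsum0
  have hones : ((hfin.toFinset.card : ℕ) : ZMod 2) = 0 := by
    have h2 : ∑ v ∈ hfin.toFinset, toricBoundary γ (Sum.inl v)
        = ∑ _v ∈ hfin.toFinset, (1 : ZMod 2) :=
      Finset.sum_congr rfl fun v hv => zmod2_eq_one (hfin.mem_toFinset.mp hv)
    rw [h2, Finset.sum_const, nsmul_eq_mul, mul_one] at hsum1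
    exact hsum1
  rw [Set.ncard_eq_toFinset_card _ hfin, Nat.even_iff]
  have := (ZMod.natCast_eq_zero_iff _ 2).mp hones
  omega

lemma forward_F (γ : ToricΓ) :
    {p | toricBoundary γ (Sum.inr p) ≠ 0}.Finite ∧
      Even {p | toricBoundary γ (Sum.inr p) ≠ 0}.ncard := by
  classical
  set Efin : Finset LatEdge := γ.support.biUnion
    (fun x => match x with | Sum.inl e => {e} | Sum.inr _ => ∅) with hEfin
  have hE : ∀ e : LatEdge, e ∈ Efin ↔ γ (Sum.inl e) ≠ 0 := by
    intro e
    simp only [hEfin, Finset.mem_biUnion, Finsupp.mem_support_iff]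
    constructor
    · rintro ⟨x, hx, hmem⟩
      cases x with
      | inr e' => simp at hmem
      | inl e' => simp at hmem; subst hmem; exact hx
    · intro h; exact ⟨Sum.inl e, h, by simp⟩
  set S : Finset (ℤ × ℤ) := Efin.biUnion fends with hS
  have hsub : {p | toricBoundary γ (Sum.inr p) ≠ 0} ⊆ ↑S := by
    intro p hp
    obtain ⟨e, he, hne⟩ := Finset.exists_ne_zero_of_sum_ne_zero hp
    have heE : e ∈ Efin := (hE e).mpr hne
    exact Finset.mem_coe.mpr (Finset.mem_biUnion.mpr ⟨e, heE, mem_faceBdry.mp he⟩)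
  have hfin := Set.Finite.subset S.finite_toSet hsub
  refine ⟨hfin, ?_⟩
  have hrw : ∀ p, toricBoundary γ (Sum.inr p) =
      ∑ e ∈ Efin, if e ∈ faceBdry p then γ (Sum.inl e) else 0 := by
    intro p
    show (∑ e ∈ faceBdry p, γ (Sum.inl e)) = _
    rw [Finset.sum_ite_mem]
    symm
    apply Finset.sum_subset Finset.inter_subset_right
    intro e he hne
    have : e ∉ Efin := fun h => hne (Finset.mem_inter.mpr ⟨h, he⟩)
    by_contra hc
    exact this ((hE e).mpr hc)
  have hsum0 : ∑ p ∈ S, toricBoundary γ (Sum.inr p) = 0 := by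
    calc ∑ p ∈ S, toricBoundary γ (Sum.inr p)
        = ∑ p ∈ S, ∑ e ∈ Efin, if e ∈ faceBdry p then γ (Sum.inl e) else 0 :=
          Finset.sum_congr rfl fun p _ => hrw p
      _ = ∑ e ∈ Efin, ∑ p ∈ S, if e ∈ faceBdry p then γ (Sum.inl e) else 0 :=
          Finset.sum_comm
      _ = ∑ e ∈ Efin, ∑ p ∈ S, if p ∈ fends e then γ (Sum.inl e) else 0 := by
          refine Finset.sum_congr rfl fun e _ => Finset.sum_congr rfl fun p _ => ?_
          simp only [mem_faceBdry]
      _ = ∑ e ∈ Efin, ∑ p ∈ S ∩ fends e, γ (Sum.inl e) := by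
          refine Finset.sum_congr rfl fun e _ => ?_
          rw [Finset.sum_ite_mem]
      _ = ∑ e ∈ Efin, ∑ p ∈ fends e, γ (Sum.inl e) := by
          refine Finset.sum_congr rfl fun e he => ?_
          congr 1
          exact Finset.inter_eq_right.mpr (Finset.subset_biUnion_of_mem fends he)
      _ = ∑ e ∈ Efin, (2 : ℕ) • γ (Sum.inl e) := by
          refine Finset.sum_congr rfl fun e _ => ?_
          rw [Finset.sum_const, fends_card]
      _ = 0 := by
          refine Finset.sum_eq_zero fun e _ => ?_
          rw [two_nsmul, CharTwo.add_self_eq_zero]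
  have hT : hfin.toFinset ⊆ S := by
    intro x hx
    exact hsub (hfin.mem_toFinset.mp hx)
  have hsum1 : ∑ p ∈ hfin.toFinset, toricBoundary γ (Sum.inr p) = 0 := by
    rw [Finset.sum_subset hT (fun x _ hx => by
      simpa using fun h => hx (hfin.mem_toFinset.mpr h))]
    exact hsum0
  have hones : ((hfin.toFinset.card : ℕ) : ZMod 2) = 0 := by
    have h2 : ∑ p ∈ hfin.toFinset, toricBoundary γ (Sum.inr p)
        = ∑ _p ∈ hfin.toFinset, (1 : ZMod 2) :=
      Finset.sum_congr rfl fun p hp => zmod2_eq_one (hfin.mem_toFinset.mp hp)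
    rw [h2, Finset.sum_const, nsmul_eq_mul, mul_one] at hsum1
    exact hsum1
  rw [Set.ncard_eq_toFinset_card _ hfin, Nat.even_iff]
  have := (ZMod.natCast_eq_zero_iff _ 2).mp hones
  omega

theorem toricBoundary_range :
    Set.range toricBoundary =
      {f : (ℤ × ℤ) ⊕ (ℤ × ℤ) → ZMod 2 |
        {v | f (Sum.inl v) ≠ 0}.Finite ∧ Even {v | f (Sum.inl v) ≠ 0}.ncard ∧
        {p | f (Sum.inr p) ≠ 0}.Finite ∧ Even {p | f (Sum.inr p) ≠ 0}.ncard} := by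
  apply Set.eq_of_subset_of_subset
  · rintro f ⟨γ, rfl⟩
    obtain ⟨h1, h2⟩ := forward_V γ
    obtain ⟨h3, h4⟩ := forward_F γ
    exact ⟨h1, h2, h3, h4⟩
  · rintro f ⟨h1, h2, h3, h4⟩
    have hV : Even h1.toFinset.card := by
      rwa [Set.ncard_eq_toFinset_card _ h1] at h2
    have hF : Even h3.toFinset.card := by
      rwa [Set.ncard_eq_toFinset_card _ h3] at h4
    have key : f = (fun x => match x with
        | Sum.inl v => if v ∈ h1.toFinset then (1 : ZMod 2) else 0
        | Sum.inr _ => 0) + (fun x => match x with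
        | Sum.inr p => if p ∈ h3.toFinset then (1 : ZMod 2) else 0
        | Sum.inl _ => 0) := by
      funext x
      cases x with
      | inl v =>
        show f (Sum.inl v) = (if v ∈ h1.toFinset then (1 : ZMod 2) else 0) + 0
        rw [add_zero]
        by_cases h : f (Sum.inl v) ≠ 0
        · rw [if_pos (h1.mem_toFinset.mpr h)]
          exact zmod2_eq_one h
        · rw [not_not] at h
          rw [h, if_neg (fun hc => by
            have := h1.mem_toFinset.mp hc
            exact this h)]
      | inr p =>
        show f (Sum.inr p) = 0 + (if p ∈ h3.toFinset then (1 : ZMod 2) else 0)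
        rw [zero_add]
        by_cases h : f (Sum.inr p) ≠ 0
        · rw [if_pos (h3.mem_toFinset.mpr h)]
          exact zmod2_eq_one h
        · rw [not_not] at h
          rw [h, if_neg (fun hc => by
            have := h3.mem_toFinset.mp hc
            exact this h)]
    rw [key]
    exact range_add (indV_mem _ hV) (indF_mem _ hF)
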